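/- arXiv:1809.06596 — 2 statements merged into one kernel-verified Lean document; each statement's English description precedes it below -/
import Mathlib

section
/- Let W be a real random variable with law N(0, T), and define X := log s0 + (r − σ0²/2)T + σ0 W. Then E[ W · 1_{X > log K} e^{X} ] = s0 e^{rT} ( σ0 T Φ(d₊) + √T φ(d₊) ). -/
open Set Real MeasureTheory ProbabilityTheory

/-- The standard normal density. -/
noncomputable def stdNormalPDF (x : ℝ) : ℝ :=
  (Real.sqrt (2 * Real.pi))⁻¹ * Real.exp (-x ^ 2 / 2)

/-- The standard normal cumulative distribution function. -/
noncomputable def stdNormalCDF (x : ℝ) : ℝ :=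
  ∫ y in Set.Iio x, stdNormalPDF y

lemma integral_comp_add_right_Ioi' (f : ℝ → ℝ) (b d : ℝ) :
    ∫ x in Set.Ioi b, f (x + d) = ∫ x in Set.Ioi (b + d), f x := by
  have A : MeasurableEmbedding (fun x : ℝ => x + d) :=
    (Homeomorph.addRight d).isClosedEmbedding.measurableEmbedding
  have h := A.setIntegral_map (μ := volume) f (Set.Ioi (b + d))
  rw [map_add_right_eq_self volume d] at h
  rw [preimage_add_const_Ioi, add_sub_cancel_right] at h
  exact h.symm

lemma integrableOn_id_mul_exp_neg_sq_half (c : ℝ) :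
    IntegrableOn (fun y : ℝ => y * Real.exp (-y ^ 2 / 2)) (Set.Ioi c) := by
  have := (integrable_mul_exp_neg_mul_sq (b := 1/2) (by norm_num)).integrableOn (s := Set.Ioi c)
  refine this.congr_fun (fun x _ => ?_) measurableSet_Ioi
  ring_nf

lemma integral_Ioi_id_mul_exp (c : ℝ) :
    ∫ y in Set.Ioi c, y * Real.exp (-y ^ 2 / 2) = Real.exp (-c ^ 2 / 2) := by
  have hderiv : ∀ x ∈ Set.Ici c, HasDerivAt (fun y => -Real.exp (-y ^ 2 / 2))
      (x * Real.exp (-x ^ 2 / 2)) x := by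
    intro x _
    have h1 : HasDerivAt (fun y : ℝ => -y ^ 2 / 2) (-x) x := by
      have := ((hasDerivAt_pow 2 x).neg).div_const 2
      simpa using this.congr_deriv (by ring)
    have := (h1.exp).neg
    exact this.congr_deriv (by ring)
  have htend : Filter.Tendsto (fun y => -Real.exp (-y ^ 2 / 2)) Filter.atTop (nhds 0) := by
    rw [← neg_zero]
    refine Filter.Tendsto.neg ?_
    refine Real.tendsto_exp_atBot.comp ?_
    apply Filter.Tendsto.atBot_div_const (by norm_num)
    exact Filter.tendsto_neg_atBot_iff.mpr (Filter.tendsto_pow_atTop (by norm_num))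
  have := integral_Ioi_of_hasDerivAt_of_tendsto' hderiv
    (integrableOn_id_mul_exp_neg_sq_half c) htend
  rw [this]; ring

lemma integrableOn_exp_neg_sq_half (c : ℝ) :
    IntegrableOn (fun y : ℝ => Real.exp (-y ^ 2 / 2)) (Set.Ioi c) := by
  have := (integrable_exp_neg_mul_sq (b := 1/2) (by norm_num)).integrableOn (s := Set.Ioi c)
  refine this.congr_fun (fun x _ => ?_) measurableSet_Ioi
  ring_nf

lemma integral_Ioi_exp_neg_sq_half (c : ℝ) :
    ∫ y in Set.Ioi (-c), Real.exp (-y ^ 2 / 2) = Real.sqrt (2 * Real.pi) * stdNormalCDF c := by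
  have h1 : ∫ y in Set.Ioi (-c), Real.exp (-y ^ 2 / 2)
      = ∫ y in Set.Iic c, Real.exp (-y ^ 2 / 2) := by
    have := integral_comp_neg_Ioi (-c) (fun y => Real.exp (-y ^ 2 / 2))
    simp only [neg_neg, neg_sq] at this ⊢
    exact this
  rw [h1, integral_Iic_eq_integral_Iio]
  unfold stdNormalCDF stdNormalPDF
  rw [integral_const_mul, ← mul_assoc, mul_inv_cancel₀ (by positivity), one_mul]

/-- If `W` has law `N(0, T)` and `X = log s0 + (r − σ0²/2)T + σ0 W`, then
`E[W 1_{X > log K} e^X] = s0 e^{rT} (σ0 T Φ(d₊) + √T φ(d₊))`. -/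
theorem expectation_W_indicator_exp_gaussian
    {Ω : Type*} [MeasurableSpace Ω] (P : Measure Ω) [IsProbabilityMeasure P]
    (s0 K σ0 T r : ℝ) (hs0 : 0 < s0) (hK : 0 < K) (hσ0 : 0 < σ0) (hT : 0 < T)
    (W : Ω → ℝ) (hWmeas : Measurable W)
    (hW : Measure.map W P = gaussianReal 0 (Real.toNNReal T)) :
    ∫ ω, W ω * Set.indicator (Set.Ioi (Real.log K)) (fun x => Real.exp x)
        (Real.log s0 + (r - σ0 ^ 2 / 2) * T + σ0 * W ω) ∂P =
      s0 * Real.exp (r * T) *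
        (σ0 * T * stdNormalCDF ((Real.log (s0 / K) + (r + σ0 ^ 2 / 2) * T) / (σ0 * Real.sqrt T))
          + Real.sqrt T *
            stdNormalPDF ((Real.log (s0 / K) + (r + σ0 ^ 2 / 2) * T) / (σ0 * Real.sqrt T))) := by
  have hsT : 0 < Real.sqrt T := Real.sqrt_pos.mpr hT
  set a : ℝ := Real.log s0 + (r - σ0 ^ 2 / 2) * T with ha
  set L : ℝ := Real.log K with hL
  set m : ℝ := (L - a) / σ0 with hm
  set μ : ℝ := σ0 * T with hμ
  set d : ℝ := (Real.log (s0 / K) + (r + σ0 ^ 2 / 2) * T) / (σ0 * Real.sqrt T) with hd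
  set g : ℝ → ℝ := fun x => x * Set.indicator (Set.Ioi L) (fun x => Real.exp x) (a + σ0 * x)
    with hg
  have hgmeas : Measurable g := by
    apply measurable_id.mul
    exact (Real.measurable_exp.indicator measurableSet_Ioi).comp
      (measurable_const.add (measurable_const.mul measurable_id))
  -- Step 1: transfer to the law of W
  have h1 : ∫ ω, W ω * Set.indicator (Set.Ioi L) (fun x => Real.exp x)
        (a + σ0 * W ω) ∂P = ∫ x, g x ∂(Measure.map W P) := by
    rw [integral_map hWmeas.aemeasurable hgmeas.aestronglyMeasurable]
  rw [h1, hW]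
  -- Step 2: gaussian as density
  have hv : (Real.toNNReal T) ≠ 0 := (Real.toNNReal_pos.mpr hT).ne'
  have hvT : ((Real.toNNReal T : NNReal) : ℝ) = T := Real.coe_toNNReal T hT.le
  rw [gaussianReal_of_var_ne_zero 0 hv]
  have hpdfmeas : Measurable fun x => Real.toNNReal (gaussianPDFReal 0 (Real.toNNReal T) x) :=
    (measurable_gaussianPDFReal _ _).real_toNNReal
  have h2 : ∫ x, g x ∂(volume.withDensity (gaussianPDF 0 (Real.toNNReal T)))
      = ∫ x, gaussianPDFReal 0 (Real.toNNReal T) x * g x := by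
    have : gaussianPDF 0 (Real.toNNReal T)
        = fun x => ((Real.toNNReal (gaussianPDFReal 0 (Real.toNNReal T) x) : NNReal) : ENNReal) :=
      rfl
    rw [this, integral_withDensity_eq_integral_smul hpdfmeas]
    refine integral_congr_ae (Filter.Eventually.of_forall fun x => ?_)
    simp only [NNReal.smul_def, Real.coe_toNNReal _ (gaussianPDFReal_nonneg 0 (Real.toNNReal T) x), smul_eq_mul]
  rw [h2]
  -- Step 3: pointwise rewrite as indicator
  set C : ℝ := Real.exp (a + σ0 ^ 2 * T / 2) * (Real.sqrt (2 * Real.pi * T))⁻¹ with hC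
  have h3 : ∀ x : ℝ, gaussianPDFReal 0 (Real.toNNReal T) x * g x
      = Set.indicator (Set.Ioi m) (fun x => C * (x * Real.exp (-(x - μ) ^ 2 / (2 * T)))) x := by
    intro x
    have hmem : (a + σ0 * x ∈ Set.Ioi L) ↔ x ∈ Set.Ioi m := by
      simp only [Set.mem_Ioi, hm, div_lt_iff₀ hσ0]
      constructor <;> intro h <;> nlinarith
    by_cases hx : x ∈ Set.Ioi m
    · rw [Set.indicator_of_mem hx]
      rw [hg]
      simp only
      rw [Set.indicator_of_mem (hmem.mpr hx)]
      rw [gaussianPDFReal, hvT]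
      have hexp : Real.exp (-(x - 0) ^ 2 / (2 * T)) * Real.exp (a + σ0 * x)
          = Real.exp (a + σ0 ^ 2 * T / 2) * Real.exp (-(x - μ) ^ 2 / (2 * T)) := by
        rw [← Real.exp_add, ← Real.exp_add]
        congr 1
        field_simp
        ring
      rw [hC]
      linear_combination (Real.sqrt (2 * Real.pi * T))⁻¹ * x * hexp
    · rw [Set.indicator_of_notMem hx, hg]
      simp only
      rw [Set.indicator_of_notMem (fun h => hx (hmem.mp h)), mul_zero, mul_zero]
  rw [integral_congr_ae (Filter.Eventually.of_forall h3), integral_indicator measurableSet_Ioi]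
  rw [integral_const_mul]
  -- Step 4: shift by μ
  have h4 : ∫ x in Set.Ioi m, x * Real.exp (-(x - μ) ^ 2 / (2 * T))
      = ∫ x in Set.Ioi (m - μ), (x + μ) * Real.exp (-x ^ 2 / (2 * T)) := by
    have h := integral_comp_add_right_Ioi' (fun x => x * Real.exp (-(x - μ) ^ 2 / (2 * T)))
      (m - μ) μ
    rw [sub_add_cancel] at h
    rw [← h]
    refine setIntegral_congr_fun measurableSet_Ioi fun x _ => ?_
    simp [add_sub_cancel_right]
  rw [h4]
  -- Step 5: scale by √T
  have hsd : m - μ = Real.sqrt T * (-d) := by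
    rw [hd, hm, hμ, ha, hL, Real.log_div hs0.ne' hK.ne']
    field_simp
    ring_nf
  have h5 : ∫ x in Set.Ioi (m - μ), (x + μ) * Real.exp (-x ^ 2 / (2 * T))
      = Real.sqrt T * ∫ y in Set.Ioi (-d),
          (Real.sqrt T * y + μ) * Real.exp (-y ^ 2 / 2) := by
    have h := integral_comp_mul_left_Ioi
      (fun x => (x + μ) * Real.exp (-x ^ 2 / (2 * T))) (-d) hsT
    rw [← hsd] at h
    have hy : ∀ y : ℝ, (Real.sqrt T * y + μ) * Real.exp (-(Real.sqrt T * y) ^ 2 / (2 * T))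
        = (Real.sqrt T * y + μ) * Real.exp (-y ^ 2 / 2) := by
      intro y
      congr 2
      rw [mul_pow, Real.sq_sqrt hT.le]
      field_simp [hT.ne']
    calc ∫ x in Set.Ioi (m - μ), (x + μ) * Real.exp (-x ^ 2 / (2 * T))
        = Real.sqrt T * ((Real.sqrt T)⁻¹ • ∫ x in Set.Ioi (m - μ),
            (x + μ) * Real.exp (-x ^ 2 / (2 * T))) := by
          rw [smul_eq_mul, ← mul_assoc, mul_inv_cancel₀ hsT.ne', one_mul]
      _ = Real.sqrt T * ∫ y in Set.Ioi (-d),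
            (Real.sqrt T * y + μ) * Real.exp (-y ^ 2 / 2) := by
          rw [← h]
          congr 1
          exact setIntegral_congr_fun measurableSet_Ioi fun y _ => hy y
  rw [h5]
  -- Step 6: split and evaluate
  have h6 : ∫ y in Set.Ioi (-d), (Real.sqrt T * y + μ) * Real.exp (-y ^ 2 / 2)
      = Real.sqrt T * Real.exp (-d ^ 2 / 2)
        + μ * (Real.sqrt (2 * Real.pi) * stdNormalCDF d) := by
    have heq : ∀ y : ℝ, (Real.sqrt T * y + μ) * Real.exp (-y ^ 2 / 2)
        = Real.sqrt T * (y * Real.exp (-y ^ 2 / 2)) + μ * Real.exp (-y ^ 2 / 2) := by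
      intro y; ring
    rw [setIntegral_congr_fun measurableSet_Ioi fun y _ => heq y]
    rw [integral_add ((integrableOn_id_mul_exp_neg_sq_half (-d)).const_mul _)
      ((integrableOn_exp_neg_sq_half (-d)).const_mul _)]
    rw [integral_const_mul, integral_const_mul, integral_Ioi_id_mul_exp,
      integral_Ioi_exp_neg_sq_half, neg_sq]
  rw [h6]
  -- Step 7: final algebra
  rw [hC, hμ]
  have hexp2 : Real.exp (a + σ0 ^ 2 * T / 2) = s0 * Real.exp (r * T) := by
    rw [ha, show Real.log s0 + (r - σ0 ^ 2 / 2) * T + σ0 ^ 2 * T / 2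
      = Real.log s0 + r * T by ring, Real.exp_add, Real.exp_log hs0]
  rw [hexp2]
  rw [show (2 : ℝ) * Real.pi * T = 2 * Real.pi * T by rfl,
    Real.sqrt_mul (by positivity : (0:ℝ) ≤ 2 * Real.pi) T]
  rw [stdNormalPDF]
  have h2pi : Real.sqrt (2 * Real.pi) ≠ 0 := by positivity
  field_simp
  ring_nf
end

section
/- Let W be a real random variable with law N(0, T), and define X := log s0 + (r − σ0²/2)T + σ0 W. Then E[ W² · 1_{X > log K} e^{X} ] = s0 e^{rT} T ( (1 + σ0² T) Φ(d₊) + (2 σ0 √T − d₊) φ(d₊) ). -/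
open Set Real MeasureTheory ProbabilityTheory

open Filter
open scoped ENNReal NNReal

lemma stdNormalPDF_neg (x : ℝ) : stdNormalPDF (-x) = stdNormalPDF x := by
  simp [stdNormalPDF]

lemma measurable_stdNormalPDF : Measurable stdNormalPDF := by
  unfold stdNormalPDF; fun_prop

lemma integrable_exp_half : Integrable (fun x : ℝ => Real.exp (-x ^ 2 / 2)) := by
  have : (fun x : ℝ => Real.exp (-x ^ 2 / 2)) = fun x : ℝ => Real.exp (-(1/2 : ℝ) * x ^ 2) := by
    funext x; ring_nf
  rw [this]
  exact integrable_exp_neg_mul_sq (by norm_num)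

lemma integrable_stdNormalPDF : Integrable stdNormalPDF := by
  have : stdNormalPDF = fun x => (Real.sqrt (2 * Real.pi))⁻¹ * Real.exp (-x ^ 2 / 2) := rfl
  rw [this]
  exact integrable_exp_half.const_mul _

lemma integrable_mul_exp_half : Integrable (fun x : ℝ => x * Real.exp (-x ^ 2 / 2)) := by
  have : (fun x : ℝ => x * Real.exp (-x ^ 2 / 2))
      = fun x : ℝ => x * Real.exp (-(1/2 : ℝ) * x ^ 2) := by
    funext x; ring_nf
  rw [this]
  exact integrable_mul_exp_neg_mul_sq (by norm_num)

lemma sq_exp_bound (x : ℝ) : ‖x ^ 2 * Real.exp (-x ^ 2 / 2)‖ ≤ 4 * Real.exp (-(1/4 : ℝ) * x ^ 2) := by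
  have h8 := Real.add_one_le_exp (x ^ 2 / 8)
  have hmul : Real.exp (x ^ 2 / 8) * Real.exp (x ^ 2 / 8) = Real.exp (x ^ 2 / 4) := by
    rw [← Real.exp_add]; ring_nf
  have hsum : Real.exp (-x ^ 2 / 2) * Real.exp (x ^ 2 / 4) = Real.exp (-(1/4 : ℝ) * x ^ 2) := by
    rw [← Real.exp_add]; ring_nf
  have hx2 : x ^ 2 ≤ 4 * Real.exp (x ^ 2 / 4) := by
    nlinarith [Real.exp_pos (x ^ 2 / 8), sq_nonneg x]
  have hnorm : ‖x ^ 2 * Real.exp (-x ^ 2 / 2)‖ = x ^ 2 * Real.exp (-x ^ 2 / 2) := by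
    rw [Real.norm_eq_abs, abs_of_nonneg]; positivity
  rw [hnorm]
  nlinarith [Real.exp_pos (-x ^ 2 / 2), Real.exp_pos (x ^ 2 / 4), mul_le_mul_of_nonneg_left hx2 (Real.exp_pos (-x ^ 2 / 2)).le]

lemma integrable_sq_exp_half : Integrable (fun x : ℝ => x ^ 2 * Real.exp (-x ^ 2 / 2)) := by
  refine Integrable.mono' ((integrable_exp_neg_mul_sq (by norm_num : (0:ℝ) < 1/4)).const_mul 4) ?_ ?_
  · apply Measurable.aestronglyMeasurable; fun_prop
  · exact ae_of_all _ sq_exp_bound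

lemma integrable_sq_stdNormalPDF : Integrable (fun x : ℝ => x ^ 2 * stdNormalPDF x) := by
  have : (fun x : ℝ => x ^ 2 * stdNormalPDF x)
      = fun x : ℝ => (Real.sqrt (2 * Real.pi))⁻¹ * (x ^ 2 * Real.exp (-x ^ 2 / 2)) := by
    funext x; simp [stdNormalPDF]; ring
  rw [this]
  exact integrable_sq_exp_half.const_mul _

lemma integrable_mul_stdNormalPDF : Integrable (fun x : ℝ => x * stdNormalPDF x) := by
  have : (fun x : ℝ => x * stdNormalPDF x)
      = fun x : ℝ => (Real.sqrt (2 * Real.pi))⁻¹ * (x * Real.exp (-x ^ 2 / 2)) := by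
    funext x; simp [stdNormalPDF]; ring
  rw [this]
  exact integrable_mul_exp_half.const_mul _

lemma tendsto_neg_sq_half : Tendsto (fun x : ℝ => -x ^ 2 / 2) atTop atBot := by
  apply Filter.Tendsto.atBot_div_const (by norm_num : (0:ℝ) < 2)
  exact tendsto_neg_atBot_iff.mpr (tendsto_pow_atTop (two_ne_zero))

lemma tendsto_exp_half : Tendsto (fun x : ℝ => Real.exp (-x ^ 2 / 2)) atTop (nhds 0) :=
  Real.tendsto_exp_atBot.comp tendsto_neg_sq_half

lemma tendsto_stdNormalPDF : Tendsto stdNormalPDF atTop (nhds 0) := by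
  have : stdNormalPDF = fun x => (Real.sqrt (2 * Real.pi))⁻¹ * Real.exp (-x ^ 2 / 2) := rfl
  rw [this]
  simpa using (tendsto_exp_half.const_mul (Real.sqrt (2 * Real.pi))⁻¹)

lemma tendsto_mul_exp_half : Tendsto (fun x : ℝ => x * Real.exp (-x ^ 2 / 2)) atTop (nhds 0) := by
  have hb : Tendsto (fun x : ℝ => Real.exp (-(1/4:ℝ) * x ^ 2)) atTop (nhds 0) := by
    apply Real.tendsto_exp_atBot.comp
    have : (fun x : ℝ => -(1/4:ℝ) * x ^ 2) = fun x : ℝ => -x^2/4 := by funext x; ring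
    rw [this]
    apply Filter.Tendsto.atBot_div_const (by norm_num : (0:ℝ) < 4)
    exact tendsto_neg_atBot_iff.mpr (tendsto_pow_atTop (two_ne_zero))
  apply squeeze_zero' (g := fun x : ℝ => Real.exp (-(1/4:ℝ) * x ^ 2)) ?_ ?_ hb
  · filter_upwards [eventually_ge_atTop (0:ℝ)] with x hx
    positivity
  · filter_upwards [eventually_ge_atTop (0:ℝ)] with x hx
    have h1 := Real.add_one_le_exp (x ^ 2 / 4)
    have hsum : Real.exp (-x ^ 2 / 2) * Real.exp (x ^ 2 / 4) = Real.exp (-(1/4 : ℝ) * x ^ 2) := by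
      rw [← Real.exp_add]; ring_nf
    have hx4 : x ≤ Real.exp (x ^ 2 / 4) := by nlinarith [sq_nonneg (x - 2)]
    nlinarith [Real.exp_pos (-x ^ 2 / 2), mul_le_mul_of_nonneg_left hx4 (Real.exp_pos (-x ^ 2 / 2)).le]

lemma tendsto_mul_stdNormalPDF : Tendsto (fun x : ℝ => x * stdNormalPDF x) atTop (nhds 0) := by
  have : (fun x : ℝ => x * stdNormalPDF x)
      = fun x : ℝ => (Real.sqrt (2 * Real.pi))⁻¹ * (x * Real.exp (-x ^ 2 / 2)) := by
    funext x; simp [stdNormalPDF]; ring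
  rw [this]
  simpa using tendsto_mul_exp_half.const_mul (Real.sqrt (2 * Real.pi))⁻¹

lemma hasDerivAt_exp_half (x : ℝ) :
    HasDerivAt (fun x : ℝ => Real.exp (-x ^ 2 / 2)) (-x * Real.exp (-x ^ 2 / 2)) x := by
  have h1 : HasDerivAt (fun x : ℝ => -x ^ 2 / 2) (-x) x := by
    have := ((hasDerivAt_pow 2 x).neg.div_const 2)
    refine this.congr_deriv ?_
    simp; ring
  simpa [mul_comm] using h1.exp

lemma hasDerivAt_neg_std (x : ℝ) :
    HasDerivAt (fun x : ℝ => -stdNormalPDF x) (x * stdNormalPDF x) x := by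
  have := ((hasDerivAt_exp_half x).const_mul (Real.sqrt (2 * Real.pi))⁻¹).neg
  refine this.congr_deriv ?_
  unfold stdNormalPDF; ring

lemma hasDerivAt_neg_mul_std (x : ℝ) :
    HasDerivAt (fun x : ℝ => -(x * stdNormalPDF x))
      (x ^ 2 * stdNormalPDF x - stdNormalPDF x) x := by
  have h1 : HasDerivAt (fun x : ℝ => x * stdNormalPDF x)
      (1 * stdNormalPDF x + x * (-x * stdNormalPDF x)) x := by
    have hφ : HasDerivAt stdNormalPDF (-x * stdNormalPDF x) x := by
      have := (hasDerivAt_exp_half x).const_mul (Real.sqrt (2 * Real.pi))⁻¹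
      refine this.congr_deriv ?_
      unfold stdNormalPDF; ring
    exact (hasDerivAt_id x).mul hφ
  have := h1.neg
  refine this.congr_deriv ?_
  ring

lemma integral_Ioi_mul_std (p : ℝ) :
    ∫ x in Ioi p, x * stdNormalPDF x = stdNormalPDF p := by
  have := integral_Ioi_of_hasDerivAt_of_tendsto'
    (f := fun x : ℝ => -stdNormalPDF x) (f' := fun x : ℝ => x * stdNormalPDF x) (a := p)
    (fun x _ => hasDerivAt_neg_std x) integrable_mul_stdNormalPDF.integrableOn
    (by simpa using tendsto_stdNormalPDF.neg)
  simpa using this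

lemma integral_Ioi_sq_std (p : ℝ) :
    ∫ x in Ioi p, x ^ 2 * stdNormalPDF x
      = p * stdNormalPDF p + ∫ x in Ioi p, stdNormalPDF x := by
  have h := integral_Ioi_of_hasDerivAt_of_tendsto'
    (f := fun x : ℝ => -(x * stdNormalPDF x))
    (f' := fun x : ℝ => x ^ 2 * stdNormalPDF x - stdNormalPDF x) (a := p)
    (fun x _ => hasDerivAt_neg_mul_std x)
    (integrable_sq_stdNormalPDF.sub integrable_stdNormalPDF).integrableOn
    (by simpa using tendsto_mul_stdNormalPDF.neg)
  have hsub : ∫ x in Ioi p, (x ^ 2 * stdNormalPDF x - stdNormalPDF x)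
      = (∫ x in Ioi p, x ^ 2 * stdNormalPDF x) - ∫ x in Ioi p, stdNormalPDF x :=
    integral_sub integrable_sq_stdNormalPDF.integrableOn integrable_stdNormalPDF.integrableOn
  rw [hsub] at h
  simp only [neg_zero, zero_sub, neg_neg] at h
  linarith [h]

lemma integral_Ioi_std (d : ℝ) :
    ∫ x in Ioi (-d), stdNormalPDF x = stdNormalCDF d := by
  have h1 : ∫ x in Ioi (-d), stdNormalPDF x = ∫ x in Ioi (-d), stdNormalPDF (-x) := by
    simp_rw [stdNormalPDF_neg]
  rw [h1, integral_comp_neg_Ioi, neg_neg, integral_Iic_eq_integral_Iio]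
  rfl

lemma integral_Ioi_shift_sq_std (p c : ℝ) :
    ∫ x in Ioi p, (x + c) ^ 2 * stdNormalPDF x
      = (1 + c ^ 2) * (∫ x in Ioi p, stdNormalPDF x) + (p + 2 * c) * stdNormalPDF p := by
  have hcongr : ∀ x : ℝ, (x + c) ^ 2 * stdNormalPDF x
      = x ^ 2 * stdNormalPDF x + ((2 * c) * (x * stdNormalPDF x) + c ^ 2 * stdNormalPDF x) := by
    intro x; ring
  rw [integral_congr_ae (ae_of_all _ fun x => hcongr x)]
  have hIa : IntegrableOn (fun x : ℝ => 2 * c * (x * stdNormalPDF x) + c ^ 2 * stdNormalPDF x)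
      (Ioi p) :=
    ((integrable_mul_stdNormalPDF.const_mul (2*c)).add
      (integrable_stdNormalPDF.const_mul (c^2))).integrableOn
  have hIb : IntegrableOn (fun x : ℝ => 2 * c * (x * stdNormalPDF x)) (Ioi p) :=
    (integrable_mul_stdNormalPDF.const_mul (2*c)).integrableOn
  have hIc : IntegrableOn (fun x : ℝ => c ^ 2 * stdNormalPDF x) (Ioi p) :=
    (integrable_stdNormalPDF.const_mul (c^2)).integrableOn
  rw [integral_add integrable_sq_stdNormalPDF.integrableOn hIa,
    integral_add hIb hIc,
    integral_const_mul, integral_const_mul, integral_Ioi_mul_std, integral_Ioi_sq_std]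
  ring

/-- If `W` has law `N(0, T)` and `X = log s0 + (r − σ0²/2)T + σ0 W`, then
`E[W² 1_{X > log K} e^X] = s0 e^{rT} T ((1 + σ0²T) Φ(d₊) + (2σ0√T − d₊) φ(d₊))`. -/
theorem expectation_Wsq_indicator_exp_gaussian
    {Ω : Type*} [MeasurableSpace Ω] (P : Measure Ω) [IsProbabilityMeasure P]
    (s0 K σ0 T r : ℝ) (hs0 : 0 < s0) (hK : 0 < K) (hσ0 : 0 < σ0) (hT : 0 < T)
    (W : Ω → ℝ) (hWmeas : Measurable W)
    (hW : Measure.map W P = gaussianReal 0 (Real.toNNReal T)) :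
    ∫ ω, (W ω) ^ 2 * Set.indicator (Set.Ioi (Real.log K)) (fun x => Real.exp x)
        (Real.log s0 + (r - σ0 ^ 2 / 2) * T + σ0 * W ω) ∂P =
      s0 * Real.exp (r * T) * T *
        ((1 + σ0 ^ 2 * T) *
            stdNormalCDF ((Real.log (s0 / K) + (r + σ0 ^ 2 / 2) * T) / (σ0 * Real.sqrt T))
          + (2 * σ0 * Real.sqrt T
              - (Real.log (s0 / K) + (r + σ0 ^ 2 / 2) * T) / (σ0 * Real.sqrt T)) *
            stdNormalPDF ((Real.log (s0 / K) + (r + σ0 ^ 2 / 2) * T) / (σ0 * Real.sqrt T))) := by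
  obtain ⟨t, ht0, rfl⟩ : ∃ t : ℝ, 0 < t ∧ t ^ 2 = T :=
    ⟨Real.sqrt T, Real.sqrt_pos.2 hT, Real.sq_sqrt hT.le⟩
  rw [Real.sqrt_sq ht0.le]
  set d : ℝ := (Real.log (s0 / K) + (r + σ0 ^ 2 / 2) * t ^ 2) / (σ0 * t) with hd_def
  set g : ℝ → ℝ := fun x => x ^ 2 * Set.indicator (Set.Ioi (Real.log K)) (fun y => Real.exp y)
      (Real.log s0 + (r - σ0 ^ 2 / 2) * t ^ 2 + σ0 * x) with hg_def
  have hg_meas : Measurable g := by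
    apply Measurable.mul (by fun_prop)
    exact (Real.measurable_exp.indicator measurableSet_Ioi).comp (by fun_prop)
  have hT' : ((Real.toNNReal (t ^ 2)) : ℝ) = t ^ 2 := Real.coe_toNNReal _ hT.le
  have hT'0 : Real.toNNReal (t ^ 2) ≠ 0 := by
    simp only [ne_eq, Real.toNNReal_eq_zero, not_le]; exact hT
  -- key pointwise identity
  have key : ∀ u : ℝ, t * (gaussianPDFReal 0 (Real.toNNReal (t ^ 2)) (t * u + σ0 * t ^ 2)
        * g (t * u + σ0 * t ^ 2))
      = (s0 * Real.exp (r * t ^ 2) * t ^ 2) *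
        Set.indicator (Set.Ioi (-d)) (fun v => (v + σ0 * t) ^ 2 * stdNormalPDF v) u := by
    intro u
    have hpos : (0 : ℝ) < σ0 * t := by positivity
    have hmem : (Real.log s0 + (r - σ0 ^ 2 / 2) * t ^ 2 + σ0 * (t * u + σ0 * t ^ 2)
        ∈ Set.Ioi (Real.log K)) ↔ u ∈ Set.Ioi (-d) := by
      simp only [Set.mem_Ioi, hd_def]
      rw [neg_lt, lt_div_iff₀ hpos, Real.log_div hs0.ne' hK.ne']
      constructor <;> intro h <;> nlinarith [h]
    by_cases h : u ∈ Set.Ioi (-d)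
    · rw [Set.indicator_of_mem h, hg_def]
      simp only []
      rw [Set.indicator_of_mem (hmem.mpr h)]
      unfold gaussianPDFReal stdNormalPDF
      rw [hT']
      rw [show (2 : ℝ) * Real.pi * t ^ 2 = (2 * Real.pi) * t ^ 2 by ring,
        Real.sqrt_mul (by positivity) (t ^ 2), Real.sqrt_sq ht0.le]
      rw [show - (t * u + σ0 * t ^ 2 - 0)^2 / (2 * t ^ 2)
          = -u ^ 2 / 2 + -(σ0 * t * u) + -(σ0 ^ 2 * t ^ 2 / 2) by field_simp; ring]
      rw [show Real.log s0 + (r - σ0 ^ 2 / 2) * t ^ 2 + σ0 * (t * u + σ0 * t ^ 2)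
          = Real.log s0 + (r * t ^ 2 + (σ0 * t * u + σ0 ^ 2 * t ^ 2 / 2)) by ring]
      simp only [Real.exp_add, Real.exp_neg, Real.exp_log hs0]
      have h1 : Real.exp (σ0 * t * u) ≠ 0 := Real.exp_ne_zero _
      have h2 : Real.exp (σ0 ^ 2 * t ^ 2 / 2) ≠ 0 := Real.exp_ne_zero _
      have h3 : Real.sqrt (2 * Real.pi) ≠ 0 := by positivity
      field_simp
    · rw [Set.indicator_of_notMem h, hg_def]
      simp only []
      rw [Set.indicator_of_notMem (fun hc => h (hmem.mp hc))]
      ring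
  have hρmeas := measurable_gaussianPDFReal 0 (Real.toNNReal (t ^ 2))
  set ρ : ℝ → ℝ := gaussianPDFReal 0 (Real.toNNReal (t ^ 2)) with hρ_def
  have step1 : ∫ ω, (W ω) ^ 2 * Set.indicator (Set.Ioi (Real.log K)) (fun x => Real.exp x)
        (Real.log s0 + (r - σ0 ^ 2 / 2) * t ^ 2 + σ0 * W ω) ∂P
      = ∫ x, g x ∂(gaussianReal 0 (Real.toNNReal (t ^ 2))) := by
    rw [← hW, integral_map hWmeas.aemeasurable hg_meas.aestronglyMeasurable]
  have step2 : ∫ x, g x ∂(gaussianReal 0 (Real.toNNReal (t ^ 2))) = ∫ x, ρ x * g x := by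
    rw [gaussianReal_of_var_ne_zero _ hT'0]
    rw [show gaussianPDF 0 (Real.toNNReal (t ^ 2))
        = fun x => ((fun y => (ρ y).toNNReal) x : ℝ≥0∞) from rfl]
    rw [integral_withDensity_eq_integral_smul (hρmeas.real_toNNReal) g]
    congr 1
    funext x
    show _ • g x = _
    rw [NNReal.smul_def, Real.coe_toNNReal _ (gaussianPDFReal_nonneg _ _ _), smul_eq_mul]
  have step3 : ∫ x, ρ x * g x
      = ∫ x, ρ (x + σ0 * t ^ 2) * g (x + σ0 * t ^ 2) :=
    (integral_add_right_eq_self (fun x => ρ x * g x) (σ0 * t ^ 2)).symm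
  have step4 : ∫ x, ρ (x + σ0 * t ^ 2) * g (x + σ0 * t ^ 2)
      = t * ∫ u, ρ (t * u + σ0 * t ^ 2) * g (t * u + σ0 * t ^ 2) := by
    have h := MeasureTheory.Measure.integral_comp_mul_left
      (fun x => ρ (x + σ0 * t ^ 2) * g (x + σ0 * t ^ 2)) t
    simp only [smul_eq_mul, abs_inv, abs_of_pos ht0] at h
    rw [h, ← mul_assoc, mul_inv_cancel₀ ht0.ne', one_mul]
  have step5 : t * ∫ u, ρ (t * u + σ0 * t ^ 2) * g (t * u + σ0 * t ^ 2)
      = (s0 * Real.exp (r * t ^ 2) * t ^ 2) *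
          ∫ u, Set.indicator (Set.Ioi (-d)) (fun v => (v + σ0 * t) ^ 2 * stdNormalPDF v) u := by
    rw [← integral_const_mul t, ← integral_const_mul]
    exact integral_congr_ae (ae_of_all _ key)
  have step6 : ∫ u, Set.indicator (Set.Ioi (-d)) (fun v => (v + σ0 * t) ^ 2 * stdNormalPDF v) u
      = (1 + (σ0 * t) ^ 2) * stdNormalCDF d + (-d + 2 * (σ0 * t)) * stdNormalPDF (-d) := by
    rw [integral_indicator measurableSet_Ioi, integral_Ioi_shift_sq_std, integral_Ioi_std]
  rw [step1, step2, step3, step4, step5, step6, stdNormalPDF_neg]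
  ring
end
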